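/- Let P and Q be probability measures on ℝ, let 0 < α < 1, let G be the cumulative distribution function of Q, and let q_lo, q_hi ∈ ℝ satisfy G(q_lo) = α/2 and G(q_hi) = 1 − α/2, with G continuous at q_lo. Then P([q_lo, q_hi]) ≥ 1 − α − TV(P,Q), where TV(P,Q) = sup_B |P(B) − Q(B)| is the total variation distance with the supremum over all Borel sets B of ℝ. -/

import Mathlib

open MeasureTheory

/-- Total variation distance between two measures: the supremum over all
measurable sets `B` of `|P(B) − Q(B)|`. -/
noncomputable def totalVariation {Ω : Type*} [MeasurableSpace Ω]
    (P Q : Measure Ω) : ℝ :=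
  ⨆ B : {B : Set Ω // MeasurableSet B}, |(P B.1).toReal - (Q B.1).toReal|

/-- If the CDF `G` of `Q` satisfies `G(q_lo) = α/2` and `G(q_hi) = 1 − α/2`
with `G` continuous at `q_lo`, then `P([q_lo, q_hi]) ≥ 1 − α − TV(P,Q)`. -/
theorem interval_coverage_lower_bound
    (P Q : Measure ℝ) [IsProbabilityMeasure P] [IsProbabilityMeasure Q]
    (G : ℝ → ℝ) (hG : ∀ x, G x = (Q (Set.Iic x)).toReal)
    (α : ℝ) (hα0 : 0 < α) (hα1 : α < 1)
    (q_lo q_hi : ℝ)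
    (hlo : G q_lo = α / 2) (hhi : G q_hi = 1 - α / 2)
    (hcont : ContinuousAt G q_lo) :
    (P (Set.Icc q_lo q_hi)).toReal ≥ 1 - α - totalVariation P Q := by
  have hfinQ : ∀ s : Set ℝ, Q s ≠ ⊤ := fun s => (measure_lt_top Q s).ne
  have hmono : Monotone G := by
    intro a b hab
    rw [hG a, hG b]
    exact ENNReal.toReal_mono (hfinQ _) (measure_mono (Set.Iic_subset_Iic.2 hab))
  have hle : q_lo ≤ q_hi := by
    by_contra h
    push_neg at h
    have := hmono h.le
    rw [hlo, hhi] at this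
    linarith
  -- Q (Iio q_lo) = α/2
  have hIio : (Q (Set.Iio q_lo)).toReal = α / 2 := by
    have hU : Set.Iio q_lo = ⋃ n : ℕ, Set.Iic (q_lo - 1/(n+1)) := by
      ext x
      simp only [Set.mem_Iio, Set.mem_iUnion, Set.mem_Iic]
      constructor
      · intro hx
        obtain ⟨n, hn⟩ := exists_nat_one_div_lt (show 0 < q_lo - x by linarith)
        exact ⟨n, by linarith⟩
      · rintro ⟨n, hn⟩
        have : (0:ℝ) < 1/(n+1) := by positivity
        linarith
    have hmonoU : Monotone (fun n : ℕ => Set.Iic (q_lo - 1/(n+1 : ℝ))) := by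
      intro m n hmn
      apply Set.Iic_subset_Iic.2
      have h1 : (m+1 : ℝ) ≤ (n+1 : ℝ) := by exact_mod_cast Nat.succ_le_succ hmn
      have : (1:ℝ)/(n+1) ≤ 1/(m+1) := by
        apply one_div_le_one_div_of_le (by positivity) h1
      linarith
    have hseq : Filter.Tendsto (fun n : ℕ => Q (Set.Iic (q_lo - 1/(n+1))))
        Filter.atTop (nhds (Q (Set.Iio q_lo))) := by
      rw [hU]
      exact tendsto_measure_iUnion_atTop hmonoU
    have hseqR : Filter.Tendsto (fun n : ℕ => G (q_lo - 1/(n+1)))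
        Filter.atTop (nhds ((Q (Set.Iio q_lo)).toReal)) := by
      have := (ENNReal.tendsto_toReal (hfinQ (Set.Iio q_lo))).comp hseq
      simpa [hG, Function.comp_def] using this
    have hxn : Filter.Tendsto (fun n : ℕ => q_lo - 1/(n+1 : ℝ)) Filter.atTop (nhds q_lo) := by
      have h0 : Filter.Tendsto (fun n : ℕ => 1/((n:ℝ)+1)) Filter.atTop (nhds 0) :=
        tendsto_one_div_add_atTop_nhds_zero_nat
      have := (tendsto_const_nhds (x := q_lo)).sub h0
      simpa using this
    have hGn : Filter.Tendsto (fun n : ℕ => G (q_lo - 1/(n+1)))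
        Filter.atTop (nhds (G q_lo)) := hcont.tendsto.comp hxn
    have := tendsto_nhds_unique hseqR hGn
    rw [this, hlo]
  -- Q (Icc q_lo q_hi) = 1 - α
  have hsub : Set.Iio q_lo ⊆ Set.Iic q_hi := fun x hx => le_trans (le_of_lt hx) hle
  have hQIcc : (Q (Set.Icc q_lo q_hi)).toReal = 1 - α := by
    have hdiff : Set.Icc q_lo q_hi = Set.Iic q_hi \ Set.Iio q_lo := by
      ext x
      simp only [Set.mem_Icc, Set.mem_diff, Set.mem_Iic, Set.mem_Iio, not_lt]
      tauto
    rw [hdiff, measure_diff hsub measurableSet_Iio.nullMeasurableSet (hfinQ _),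
      ENNReal.toReal_sub_of_le (measure_mono hsub) (hfinQ _), hIio]
    have := hG q_hi
    rw [hhi] at this
    rw [← this]
    ring
  -- TV bound
  have hbdd : BddAbove (Set.range fun B : {B : Set ℝ // MeasurableSet B} =>
      |(P B.1).toReal - (Q B.1).toReal|) := by
    refine ⟨1, ?_⟩
    rintro x ⟨B, rfl⟩
    have h1 : (P B.1).toReal ≤ 1 := by
      have := prob_le_one (μ := P) (s := B.1)
      simpa using ENNReal.toReal_mono (by simp) this
    have h2 : (Q B.1).toReal ≤ 1 := by
      have := prob_le_one (μ := Q) (s := B.1)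
      simpa using ENNReal.toReal_mono (by simp) this
    have h3 : 0 ≤ (P B.1).toReal := ENNReal.toReal_nonneg
    have h4 : 0 ≤ (Q B.1).toReal := ENNReal.toReal_nonneg
    rw [abs_sub_le_iff]
    constructor <;> linarith
  have hTV : |(P (Set.Icc q_lo q_hi)).toReal - (Q (Set.Icc q_lo q_hi)).toReal|
      ≤ totalVariation P Q :=
    le_ciSup hbdd ⟨Set.Icc q_lo q_hi, measurableSet_Icc⟩
  have habs : (Q (Set.Icc q_lo q_hi)).toReal - (P (Set.Icc q_lo q_hi)).toReal
      ≤ |(P (Set.Icc q_lo q_hi)).toReal - (Q (Set.Icc q_lo q_hi)).toReal| := by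
    rw [abs_sub_comm]
    exact le_abs_self _
  linarith [hQIcc ▸ habs.trans hTV]
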